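/- Let Z, Z', B: ℝ → ℝ be continuous with Z(0) = Z'(0) = B(0) = 0, suppose Z(y) - Z(x) ≤ Z'(y) - Z'(x) for all x < y, and suppose limsup_{x → -∞} (Z(x) - B(x)) = -∞. Then B ≤_inc D(Z,B) ≤_inc D(Z',B), i.e., for all x < y, B(y) - B(x) ≤ D(Z,B)(y) - D(Z,B)(x) ≤ D(Z',B)(y) - D(Z',B)(x). -/

import Mathlib

open Filter

/-- Queue length: `Q(Z,B)(y) = sup_{x ≤ y} [(B(y)-B(x)) - (Z(y)-Z(x))]`. -/
noncomputable def Qmap (Z B : ℝ → ℝ) (y : ℝ) : ℝ :=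
  sSup ((fun x => (B y - B x) - (Z y - Z x)) '' Set.Iic y)

/-- Departure map: `D(Z,B)(y) = Z(y) + Q(Z,B)(y) - Q(Z,B)(0)`. -/
noncomputable def Dmap (Z B : ℝ → ℝ) (y : ℝ) : ℝ :=
  Z y + Qmap Z B y - Qmap Z B 0

lemma aux_bdd (f : ℝ → ℝ) (hf : Continuous f) (h : Tendsto f atBot atTop) (y : ℝ) :
    BddBelow (f '' Set.Iic y) := by
  obtain ⟨R, hR⟩ := eventually_atBot.mp (h.eventually_ge_atTop 0)
  obtain ⟨c, hc⟩ := (isCompact_Icc (a := min R y) (b := y)).bddBelow_image hf.continuousOn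
  refine ⟨min c 0, ?_⟩
  rintro _ ⟨x, hx, rfl⟩
  rcases le_or_gt x R with h1 | h1
  · exact le_trans (min_le_right _ _) (hR x h1)
  · exact le_trans (min_le_left _ _)
      (hc ⟨x, ⟨le_trans (min_le_left R y) h1.le, hx⟩, rfl⟩)

lemma aux_sSup (c : ℝ) (s : Set ℝ) (hne : s.Nonempty) (hbdd : BddBelow s) :
    sSup ((fun t => c - t) '' s) = c - sInf s := by
  have hba : BddAbove ((fun t => c - t) '' s) := by
    obtain ⟨b, hb⟩ := hbdd
    refine ⟨c - b, ?_⟩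
    rintro _ ⟨t, ht, rfl⟩
    have := hb ht
    simp only
    linarith
  apply le_antisymm
  · apply csSup_le (hne.image _)
    rintro _ ⟨t, ht, rfl⟩
    have := csInf_le hbdd ht
    simp only
    linarith
  · have : c - sSup ((fun t => c - t) '' s) ≤ sInf s := by
      apply le_csInf hne
      intro t ht
      have := le_csSup hba (Set.mem_image_of_mem _ ht)
      linarith
    linarith

lemma Qmap_eq (Z B : ℝ → ℝ) (y : ℝ)
    (hbdd : BddBelow ((fun x => B x - Z x) '' Set.Iic y)) :
    Qmap Z B y = (B y - Z y) - sInf ((fun x => B x - Z x) '' Set.Iic y) := by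
  have himg : (fun x => (B y - B x) - (Z y - Z x)) '' Set.Iic y
      = (fun t => (B y - Z y) - t) '' ((fun x => B x - Z x) '' Set.Iic y) := by
    rw [Set.image_image]
    apply Set.image_congr'
    intro x
    ring
  rw [Qmap, himg, aux_sSup _ _ (Set.nonempty_Iic.image _) hbdd]

theorem stmt5 (Z Z' B : ℝ → ℝ) (hZ : Continuous Z) (hZ' : Continuous Z')
    (hB : Continuous B) (hZ0 : Z 0 = 0) (hZ'0 : Z' 0 = 0) (hB0 : B 0 = 0)
    (hinc : ∀ x y : ℝ, x < y → Z y - Z x ≤ Z' y - Z' x)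
    (hlim : Tendsto (fun x => Z x - B x) atBot atBot) :
    ∀ x y : ℝ, x < y →
      B y - B x ≤ Dmap Z B y - Dmap Z B x ∧
      Dmap Z B y - Dmap Z B x ≤ Dmap Z' B y - Dmap Z' B x := by
  set f : ℝ → ℝ := fun x => B x - Z x with hf
  set g : ℝ → ℝ := fun x => B x - Z' x with hg
  have hfc : Continuous f := hB.sub hZ
  have hgc : Continuous g := hB.sub hZ'
  have hftop : Tendsto f atBot atTop := by
    have h1 : Tendsto (fun x => -(Z x - B x)) atBot atTop :=
      tendsto_neg_atBot_atTop.comp hlim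
    have : (fun x => -(Z x - B x)) = f := by funext x; exact neg_sub (Z x) (B x)
    rwa [this] at h1
  have hgtop : Tendsto g atBot atTop := by
    apply tendsto_atTop_mono' atBot _ hftop
    filter_upwards [eventually_lt_atBot (0 : ℝ)] with x hx
    have := hinc x 0 hx
    simp only [hf, hg]
    linarith
  set m : ℝ → ℝ := fun y => sInf (f '' Set.Iic y) with hm
  set m' : ℝ → ℝ := fun y => sInf (g '' Set.Iic y) with hm'
  have hbf : ∀ y, BddBelow (f '' Set.Iic y) := aux_bdd f hfc hftop
  have hbg : ∀ y, BddBelow (g '' Set.Iic y) := aux_bdd g hgc hgtop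
  have hne : ∀ y : ℝ, (Set.Iic y).Nonempty := fun y => Set.nonempty_Iic
  have hmono : ∀ a b : ℝ, a ≤ b → m b ≤ m a := by
    intro a b hab
    exact csInf_le_csInf (hbf b) ((hne a).image f)
      (Set.image_mono (f := f) (Set.Iic_subset_Iic.mpr hab))
  have hmono' : ∀ a b : ℝ, a ≤ b → m' b ≤ m' a := by
    intro a b hab
    exact csInf_le_csInf (hbg b) ((hne a).image g)
      (Set.image_mono (f := g) (Set.Iic_subset_Iic.mpr hab))
  have hD : ∀ t : ℝ, Dmap Z B t = B t - m t + m 0 := by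
    intro t
    have hf0 : f 0 = 0 := by simp [hf, hZ0, hB0]
    rw [Dmap, Qmap_eq Z B t (hbf t), Qmap_eq Z B 0 (hbf 0)]
    simp only [← hm, hZ0, hB0]
    ring
  have hD' : ∀ t : ℝ, Dmap Z' B t = B t - m' t + m' 0 := by
    intro t
    rw [Dmap, Qmap_eq Z' B t (hbg t), Qmap_eq Z' B 0 (hbg 0)]
    simp only [← hm', hZ'0, hB0]
    ring
  intro x y hxy
  have key : m x - m y ≤ m' x - m' y := by
    apply le_of_forall_pos_le_add
    intro ε hε
    obtain ⟨_, ⟨w, hw, rfl⟩, hlt⟩ :=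
      exists_lt_of_csInf_lt ((hne y).image f) (lt_add_of_pos_right (m y) hε)
    rcases le_or_gt w x with hwx | hwx
    · have h1 : m x ≤ f w := csInf_le (hbf x) ⟨w, hwx, rfl⟩
      have h2 : m' y ≤ m' x := hmono' x y hxy.le
      linarith
    · have h1 : m' y ≤ g w := csInf_le (hbg y) ⟨w, hw, rfl⟩
      have h2 : m x + (g w - f w) ≤ m' x := by
        apply le_csInf ((hne x).image g)
        rintro _ ⟨u, hu, rfl⟩
        have h3 := hinc u w (lt_of_le_of_lt hu hwx)
        have h4 : m x ≤ f u := csInf_le (hbf x) ⟨u, hu, rfl⟩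
        simp only [hf, hg] at *
        linarith
      linarith
  have hmxy : m y ≤ m x := hmono x y hxy.le
  rw [hD x, hD y, hD' x, hD' y]
  constructor <;> linarith
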